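/- For the class of threshold classifiers on the natural numbers with the distribution P putting mass 2^{-t} on the point t with label 0 for each t ≥ 1, the worst-case ERM learner (which outputs the threshold just above the maximum observed sample point) has expected error at least (1/2n)(1 - 2/n)^n for every n ≥ 3, hence at least 1/(18n). -/

import Mathlib

open MeasureTheory ENNReal

/-- The distribution on `ℕ` putting mass `2^{-t}` on the point `t` for each `t ≥ 1`
(labels are all `0`, so we only track the marginal on points). -/
noncomputable def geomMeasure : Measure ℕ :=
  Measure.sum fun t : ℕ => (((2 : ℝ≥0∞) ^ (t + 1))⁻¹) • Measure.dirac (t + 1)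


lemma geomMeasure_apply (A : Set ℕ) :
    geomMeasure A = ∑' t : ℕ, (((2 : ℝ≥0∞) ^ (t + 1))⁻¹) * A.indicator 1 (t + 1) := by
  rw [geomMeasure, Measure.sum_apply _ .of_discrete]
  simp [Measure.dirac_apply]

lemma sum_geom (k : ℕ) :
    (∑ t ∈ Finset.range k, ((2 : ℝ≥0∞) ^ (t + 1))⁻¹) + (2 : ℝ≥0∞)⁻¹ ^ k = 1 := by
  induction k with
  | zero => simp
  | succ k ih =>
    rw [Finset.sum_range_succ]
    have h2 : ((2 : ℝ≥0∞) ^ (k + 1))⁻¹ + (2 : ℝ≥0∞)⁻¹ ^ (k + 1) = (2 : ℝ≥0∞)⁻¹ ^ k := by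
      rw [← ENNReal.inv_pow, ← two_mul, pow_succ,
        ENNReal.mul_inv (Or.inl (pow_ne_zero _ two_ne_zero)) (Or.inl (pow_ne_top ofNat_ne_top)),
        mul_comm ((2:ℝ≥0∞)^k)⁻¹, ← mul_assoc,
        ENNReal.mul_inv_cancel two_ne_zero ofNat_ne_top, one_mul, ENNReal.inv_pow]
    rw [add_assoc, h2, ih]

lemma geomMeasure_le (k : ℕ) :
    geomMeasure {x | x ≤ k} + (2 : ℝ≥0∞)⁻¹ ^ k = 1 := by
  rw [geomMeasure_apply]
  have : (∑' t : ℕ, (((2 : ℝ≥0∞) ^ (t + 1))⁻¹) * ({x | x ≤ k} : Set ℕ).indicator 1 (t + 1)) =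
      ∑ t ∈ Finset.range k, ((2 : ℝ≥0∞) ^ (t + 1))⁻¹ := by
    rw [tsum_eq_sum (s := Finset.range k)]
    · apply Finset.sum_congr rfl
      intro t ht
      simp only [Finset.mem_range] at ht
      rw [Set.indicator_of_mem (by simpa using ht), Pi.one_apply, mul_one]
    · intro t ht
      simp only [Finset.mem_range, not_lt] at ht
      rw [Set.indicator_of_notMem (by simp only [Set.mem_setOf_eq]; omega), mul_zero]
  rw [this, sum_geom]

instance : IsProbabilityMeasure geomMeasure := by
  constructor
  rw [geomMeasure_apply]
  simp only [Set.indicator_univ, Pi.one_apply, mul_one]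
  have h : ∀ t : ℕ, ((2 : ℝ≥0∞) ^ (t + 1))⁻¹ = 2⁻¹ * (2⁻¹) ^ t := by
    intro t
    rw [← ENNReal.inv_pow, pow_succ, mul_comm,
      ENNReal.mul_inv (Or.inl two_ne_zero) (Or.inl ofNat_ne_top), ENNReal.inv_pow]
  simp_rw [h]
  rw [ENNReal.tsum_mul_left, ENNReal.tsum_geometric]
  have : (1 : ℝ≥0∞) - 2⁻¹ = 2⁻¹ := by
    rw [← ENNReal.inv_two_add_inv_two, ENNReal.add_sub_cancel_right (by simp)]
  rw [this, inv_inv, ENNReal.inv_mul_cancel two_ne_zero ofNat_ne_top]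

lemma key (n k : ℕ) :
    (2 : ℝ≥0∞)⁻¹ ^ k * (geomMeasure {x | x ≤ k}) ^ n ≤
      ∫⁻ s : Fin n → ℕ, ((2 : ℝ≥0∞)⁻¹) ^ (Finset.univ.sup s)
        ∂(Measure.pi fun _ => geomMeasure) := by
  set S : Set (Fin n → ℕ) := Set.univ.pi (fun _ => {x | x ≤ k}) with hSdef
  have hS : MeasurableSet S := MeasurableSet.univ_pi (fun i => .of_discrete)
  have h1 : ∀ s, S.indicator (fun _ => (2 : ℝ≥0∞)⁻¹ ^ k) s ≤ (2 : ℝ≥0∞)⁻¹ ^ (Finset.univ.sup s) := by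
    intro s
    by_cases hs : s ∈ S
    · rw [Set.indicator_of_mem hs]
      apply pow_le_pow_of_le_one zero_le (by simp)
      apply Finset.sup_le
      intro i _
      exact hs i (Set.mem_univ i)
    · rw [Set.indicator_of_notMem hs]; exact zero_le
  calc (2 : ℝ≥0∞)⁻¹ ^ k * (geomMeasure {x | x ≤ k}) ^ n
      = (2 : ℝ≥0∞)⁻¹ ^ k * (Measure.pi fun _ : Fin n => geomMeasure) S := by
        rw [hSdef, Measure.pi_pi]
        simp [Finset.prod_const]
    _ = ∫⁻ s, S.indicator (fun _ => (2 : ℝ≥0∞)⁻¹ ^ k) s ∂(Measure.pi fun _ => geomMeasure) := by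
        rw [lintegral_indicator_const hS]
    _ ≤ _ := lintegral_mono h1

lemma quarter (n : ℕ) (hn : 3 ≤ n) : (1 - 2 / (n : ℝ)) ^ n ≤ 1 / 4 := by
  have hn3 : (3 : ℝ) ≤ n := by exact_mod_cast hn
  have hnpos : (0 : ℝ) < n := by linarith
  have h0 : (0 : ℝ) ≤ 1 - 2 / n := by
    have : 2 / (n : ℝ) ≤ 1 := by rw [div_le_one hnpos]; linarith
    linarith
  have h1 : 1 - 2 / (n : ℝ) ≤ Real.exp (-(2 / n)) := by
    have := Real.add_one_le_exp (-(2 / (n : ℝ))); linarith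
  have h2 : (1 - 2 / (n : ℝ)) ^ n ≤ Real.exp (-(2 / n)) ^ n := pow_le_pow_left₀ h0 h1 n
  have h3 : Real.exp (-(2 / (n:ℝ))) ^ n = Real.exp (-2) := by
    rw [← Real.exp_nat_mul]
    congr 1
    field_simp
  have h4 : (4 : ℝ) ≤ Real.exp 2 := by
    have he : Real.exp 2 = Real.exp 1 * Real.exp 1 := by rw [← Real.exp_add]; norm_num
    nlinarith [Real.add_one_le_exp (1 : ℝ), Real.exp_pos 1]
  have h5 : Real.exp (-2) ≤ 1 / 4 := by
    rw [Real.exp_neg, show (1/4:ℝ) = 4⁻¹ by norm_num]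
    exact inv_anti₀ (by norm_num) h4
  calc (1 - 2 / (n : ℝ)) ^ n ≤ Real.exp (-2) := by rw [← h3]; exact h2
    _ ≤ 1 / 4 := h5


/-- For threshold classifiers on ℕ with `P{(t,0)} = 2^{-t}` for `t ≥ 1`, the
worst-case ERM outputs the threshold just above the maximum observed point `T`, incurring
error `2^{-T}`.  For every `n ≥ 3` its expected error is at least `(1/(2n))(1 - 2/n)^n`,
hence at least `1/(18n)`. -/
theorem threshold_erm_lower_bound (n : ℕ) (hn : 3 ≤ n) :
    ENNReal.ofReal ((1 / (2 * (n : ℝ))) * (1 - 2 / (n : ℝ)) ^ n) ≤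
      (∫⁻ s : Fin n → ℕ, ((2 : ℝ≥0∞)⁻¹) ^ (Finset.univ.sup s)
        ∂(Measure.pi fun _ => geomMeasure)) ∧
    ENNReal.ofReal (1 / (18 * (n : ℝ))) ≤
      (∫⁻ s : Fin n → ℕ, ((2 : ℝ≥0∞)⁻¹) ^ (Finset.univ.sup s)
        ∂(Measure.pi fun _ => geomMeasure)) := by
  have hn3 : (3 : ℝ) ≤ n := by exact_mod_cast hn
  have hnpos : (0 : ℝ) < n := by linarith
  set k : ℕ := Nat.log 2 n + 2 with hk
  -- nat facts
  have hk1 : 2 ^ k ≤ 4 * n := by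
    have := Nat.pow_log_le_self 2 (by omega : n ≠ 0)
    rw [hk]; rw [pow_succ, pow_succ]; omega
  have hk2 : 2 * n ≤ 2 ^ k := by
    have := Nat.lt_pow_succ_log_self (by norm_num : 1 < 2) n
    rw [hk, pow_succ]; omega
  -- ENNReal inverse facts
  have hpkinv : (2 : ℝ≥0∞)⁻¹ ^ k = (((2 ^ k : ℕ) : ℝ≥0∞))⁻¹ := by
    rw [← ENNReal.inv_pow]; push_cast; ring_nf
  have hofr : ∀ m : ℕ, 0 < m → ENNReal.ofReal (1 / (m : ℝ)) = ((m : ℝ≥0∞))⁻¹ := by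
    intro m hm
    rw [one_div, ENNReal.ofReal_inv_of_pos (by exact_mod_cast hm), ENNReal.ofReal_natCast]
  have ha : ENNReal.ofReal (1 / (4 * (n : ℝ))) ≤ (2 : ℝ≥0∞)⁻¹ ^ k := by
    have h4n : (4 * (n:ℝ)) = ((4 * n : ℕ) : ℝ) := by push_cast; ring
    rw [h4n, hofr (4 * n) (by omega), hpkinv]
    exact ENNReal.inv_le_inv' (by exact_mod_cast hk1)
  have hb : (2 : ℝ≥0∞)⁻¹ ^ k ≤ ENNReal.ofReal (1 / (2 * (n : ℝ))) := by
    have h2n : (2 * (n:ℝ)) = ((2 * n : ℕ) : ℝ) := by push_cast; ring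
    rw [h2n, hofr (2 * n) (by omega), hpkinv]
    exact ENNReal.inv_le_inv' (by exact_mod_cast hk2)
  -- measure lower bound
  have hc : ENNReal.ofReal (1 - 1 / (2 * (n:ℝ))) ≤ geomMeasure {x | x ≤ k} := by
    have hgm := geomMeasure_le k
    have hnn : (0 : ℝ) ≤ 1 - 1 / (2 * (n:ℝ)) := by
      have : 1 / (2 * (n:ℝ)) ≤ 1 := by rw [div_le_one (by linarith)]; linarith
      linarith
    rw [← ENNReal.add_le_add_iff_right (pow_ne_top (by simp) : (2:ℝ≥0∞)⁻¹ ^ k ≠ ⊤), hgm]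
    calc ENNReal.ofReal (1 - 1 / (2 * (n:ℝ))) + (2 : ℝ≥0∞)⁻¹ ^ k
        ≤ ENNReal.ofReal (1 - 1 / (2 * (n:ℝ))) + ENNReal.ofReal (1 / (2 * (n:ℝ))) :=
          add_le_add_right hb _
      _ = ENNReal.ofReal 1 := by
          rw [← ENNReal.ofReal_add hnn (by positivity)]; norm_num
      _ = 1 := ENNReal.ofReal_one
  -- Bernoulli
  have hber : (1 / 2 : ℝ) ≤ (1 - 1 / (2 * (n:ℝ))) ^ n := by
    have hx : (-2 : ℝ) ≤ -(1 / (2 * (n:ℝ))) := by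
      have : 1 / (2 * (n:ℝ)) ≤ 1 := by rw [div_le_one (by linarith)]; linarith
      linarith
    have := one_add_mul_le_pow hx n
    have heq : 1 + (n : ℝ) * -(1 / (2 * n)) = 1 / 2 := by field_simp; ring
    calc (1/2 : ℝ) = 1 + (n : ℝ) * -(1 / (2 * n)) := heq.symm
      _ ≤ (1 + -(1 / (2 * (n:ℝ)))) ^ n := this
      _ = (1 - 1 / (2 * (n:ℝ))) ^ n := by ring_nf
  have hnn' : (0 : ℝ) ≤ 1 - 1 / (2 * (n:ℝ)) := by
    have : 1 / (2 * (n:ℝ)) ≤ 1 := by rw [div_le_one (by linarith)]; linarith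
    linarith
  have hpow : ENNReal.ofReal (1 / 2) ≤ (geomMeasure {x | x ≤ k}) ^ n :=
    calc ENNReal.ofReal (1 / 2) ≤ ENNReal.ofReal ((1 - 1 / (2 * (n:ℝ))) ^ n) :=
          ENNReal.ofReal_le_ofReal hber
      _ = (ENNReal.ofReal (1 - 1 / (2 * (n:ℝ)))) ^ n := ENNReal.ofReal_pow hnn' n
      _ ≤ (geomMeasure {x | x ≤ k}) ^ n := pow_le_pow_left' hc n
  have hI : ENNReal.ofReal (1 / (8 * (n:ℝ))) ≤
      ∫⁻ s : Fin n → ℕ, ((2 : ℝ≥0∞)⁻¹) ^ (Finset.univ.sup s)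
        ∂(Measure.pi fun _ => geomMeasure) := by
    calc ENNReal.ofReal (1 / (8 * (n:ℝ)))
        = ENNReal.ofReal ((1 / (4 * (n:ℝ))) * (1 / 2)) := by congr 1; ring
      _ = ENNReal.ofReal (1 / (4 * (n:ℝ))) * ENNReal.ofReal (1 / 2) :=
          ENNReal.ofReal_mul (by positivity)
      _ ≤ (2 : ℝ≥0∞)⁻¹ ^ k * (geomMeasure {x | x ≤ k}) ^ n := mul_le_mul' ha hpow
      _ ≤ _ := key n k
  constructor
  · refine le_trans (ENNReal.ofReal_le_ofReal ?_) hI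
    have hq := quarter n hn
    have hpos : (0:ℝ) < 1 / (2 * n) := by positivity
    have hpnn : (0:ℝ) ≤ (1 - 2 / (n:ℝ)) ^ n := by
      apply pow_nonneg
      have : 2 / (n : ℝ) ≤ 1 := by rw [div_le_one hnpos]; linarith
      linarith
    calc (1 / (2 * (n:ℝ))) * (1 - 2 / (n:ℝ)) ^ n ≤ (1 / (2 * (n:ℝ))) * (1/4) := by
          apply mul_le_mul_of_nonneg_left hq (le_of_lt hpos)
      _ = 1 / (8 * (n:ℝ)) := by ring
  · refine le_trans (ENNReal.ofReal_le_ofReal ?_) hI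
    rw [div_le_div_iff₀ (by linarith) (by linarith)]
    linarith
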